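/- arXiv:2204.04976 — 4 statements merged into one kernel-verified Lean document; each statement's English description precedes it below -/
import Mathlib

section
/- For every integer k ≥ 1, the Hirzebruch–Jung continued fraction expansion of (2k+1)²/(2(2k+1)−1) is [k+1, 5, 2, 2, …, 2] with k−1 twos. -/
/-- Evaluation of a Hirzebruch–Jung continued fraction `[a₁, …, a_r]`, i.e.
`a₁ − 1/(a₂ − 1/(⋯ − 1/a_r))`. -/
def hjEval : List ℚ → ℚ
  | [] => 0
  | [a] => a
  | a :: l => a - 1 / hjEval l

lemma hjEval_rep (n : ℕ) : ∀ a : ℚ, hjEval (a :: List.replicate n 2) = a - n / (n + 1) := by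
  induction n with
  | zero => intro a; simp [hjEval]
  | succ n ih =>
    intro a
    have h2 : hjEval ((2 : ℚ) :: List.replicate n 2) = 2 - n / (n + 1) := ih 2
    have : (a :: List.replicate (n+1) 2) = a :: (2 : ℚ) :: List.replicate n 2 := by
      simp [List.replicate_succ]
    rw [this]
    have hpos : (0 : ℚ) < (n : ℚ) + 1 := by positivity
    have hne : ((n : ℚ) + 1) ≠ 0 := ne_of_gt hpos
    have hval : hjEval ((2:ℚ) :: List.replicate n 2) = ((n : ℚ) + 2) / (n + 1) := by
      rw [h2]; field_simp; ring
    show a - 1 / hjEval ((2:ℚ) :: List.replicate n 2) = a - (↑(n+1)) / (↑(n+1) + 1)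
    rw [hval]
    push_cast
    have hne2 : ((n : ℚ) + 2) ≠ 0 := by positivity
    field_simp
    ring

/-- The Hirzebruch–Jung continued fraction of `(2k+1)²/(2(2k+1)−1)` is
`[k+1, 5, 2, …, 2]` with `k−1` twos: its entries are all `≥ 2` and it evaluates to
`(2k+1)²/(4k+1)`. -/
theorem stmt3 (k : ℕ) (hk : 1 ≤ k) :
    hjEval (((k : ℚ) + 1) :: 5 :: List.replicate (k - 1) 2)
      = ((2 * k + 1 : ℚ)) ^ 2 / (2 * (2 * k + 1) - 1) ∧
    ∀ a ∈ (((k : ℚ) + 1) :: 5 :: List.replicate (k - 1) 2), 2 ≤ a := by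
  constructor
  · have h5 := hjEval_rep (k - 1) 5
    have hcast : ((k - 1 : ℕ) : ℚ) = (k : ℚ) - 1 := by
      have := Nat.cast_sub hk (R := ℚ); simpa using this
    rw [hcast] at h5
    have hk1 : (1 : ℚ) ≤ (k : ℚ) := by exact_mod_cast hk
    have hkpos : (0 : ℚ) < (k : ℚ) := by linarith
    have hne : (k : ℚ) ≠ 0 := ne_of_gt hkpos
    have h5' : hjEval ((5:ℚ) :: List.replicate (k-1) 2) = (4 * k + 1) / k := by
      rw [h5, sub_add_cancel, eq_div_iff hne, sub_mul, div_mul_cancel₀ _ hne]; ring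
    have hpos5 : hjEval ((5:ℚ) :: List.replicate (k-1) 2) ≠ 0 := by
      rw [h5']; positivity
    show (k : ℚ) + 1 - 1 / hjEval ((5:ℚ) :: List.replicate (k-1) 2) = _
    rw [h5', one_div_div]
    have h41 : (4 * (k:ℚ) + 1) ≠ 0 := by positivity
    have h42 : (2 * (2 * (k:ℚ) + 1) - 1) = 4 * k + 1 := by ring
    rw [h42]
    field_simp
    ring
  · intro a ha
    simp only [List.mem_cons] at ha
    rcases ha with h | h | h
    · have : (1 : ℚ) ≤ (k : ℚ) := by exact_mod_cast hk
      rw [h]; linarith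
    · rw [h]; norm_num
    · rw [List.eq_of_mem_replicate h]
end

section
/- Let f, p be integers with 1 < p < f/2 and gcd(p,f)=1, and let m₁', a₁' be the unique integers with 1 < m₁' < f, 0 < a₁' < m₁', and m₁'·p − a₁'·f = 1. Set m₂' = 2f − m₁' and a₂' = m₂' + a₁' − 2p. Then m₁'·m₂' − m₁'·a₂' − m₂'·a₁' = 2 and gcd(m₂', a₂') = 1. -/
/-- First extremal P-resolution associated to `(f,p)`: with `m₁'·p − a₁'·f = 1`,
`m₂' = 2f − m₁'`, `a₂' = m₂' + a₁' − 2p`, one has `δ = 2` (with `c = 1`) and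
`gcd(m₂', a₂') = 1`. -/
theorem stmt6 (f p m1' a1' m2' a2' : ℤ)
    (hp : 1 < p) (hpf : 2 * p < f) (hgcd : Int.gcd p f = 1)
    (hm1 : 1 < m1') (hm1f : m1' < f) (ha1 : 0 < a1') (ha1m : a1' < m1')
    (hbez : m1' * p - a1' * f = 1)
    (hm2 : m2' = 2 * f - m1') (ha2 : a2' = m2' + a1' - 2 * p) :
    m1' * m2' - m1' * a2' - m2' * a1' = 2 ∧ Int.gcd m2' a2' = 1 := by
  constructor
  · subst hm2; subst ha2; nlinarith [hbez]
  · rw [← Int.isCoprime_iff_gcd_eq_one]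
    exact ⟨f - p, -f, by subst hm2; subst ha2; nlinarith [hbez]⟩
end

section
/- Let f, p be integers with 1 < p < f/2 and gcd(p,f)=1; let m₂', q be the unique integers with 1 < m₂' < f, 0 < q < m₂', and q·f − m₂'·p = 1. Set a₂' = m₂' − q, m₁' = 2f − m₂', a₁' = 2p − q. Then m₁'·m₂' − m₁'·a₂' − m₂'·a₁' = 2 and gcd(m₁', a₁') = 1. -/
/-- Second extremal P-resolution associated to `(f,p)`: with `q·f − m₂'·p = 1`,
`a₂' = m₂' − q`, `m₁' = 2f − m₂'`, `a₁' = 2p − q`, one has `δ = 2` (with `c = 1`) and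
`gcd(m₁', a₁') = 1`. -/
theorem stmt8 (f p m1' a1' m2' a2' q : ℤ)
    (hp : 1 < p) (hpf : 2 * p < f) (hgcd : Int.gcd p f = 1)
    (hm2 : 1 < m2') (hm2f : m2' < f) (hq : 0 < q) (hqm : q < m2')
    (hbez : q * f - m2' * p = 1)
    (ha2 : a2' = m2' - q) (hm1 : m1' = 2 * f - m2') (ha1 : a1' = 2 * p - q) :
    m1' * m2' - m1' * a2' - m2' * a1' = 2 ∧ Int.gcd m1' a1' = 1 := by
  subst ha2 hm1 ha1
  constructor
  · linear_combination 2 * hbez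
  · rw [← Int.isCoprime_iff_gcd_eq_one]
    exact ⟨p, -f, by linear_combination hbez⟩
end

section
/- The element w = (−Z^{δ−1} + XY)/Y is integral over ℂ[X,Y,Z]/(XYZ − Y^δ − Z^δ): it satisfies the monic equation w² − wX + Y^{δ−2}Z^{δ−2} = 0 in the fraction field. -/
/-- The element `w = (−Z^{δ−1} + XY)/Y` of the function field of the surface
`(XYZ = Y^δ + Z^δ)` satisfies the monic equation `w² − wX + Y^{δ−2}Z^{δ−2} = 0`,
hence is integral over the coordinate ring (the subring generated by `x, y, z`). -/
theorem stmt14 (δ : ℕ) (hδ : 2 ≤ δ) (K : Type*) [Field K] (x y z : K)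
    (hrel : x * y * z = y ^ δ + z ^ δ) (hy : y ≠ 0) :
    letI w : K := (-z ^ (δ - 1) + x * y) / y
    w ^ 2 - w * x + y ^ (δ - 2) * z ^ (δ - 2) = 0 ∧
    IsIntegral (Subring.closure ({x, y, z} : Set K)) w := by
  obtain ⟨d, rfl⟩ : ∃ d, δ = d + 2 := ⟨δ - 2, by omega⟩
  simp only [show d + 2 - 1 = d + 1 from rfl, show d + 2 - 2 = d from rfl]
  set w : K := (-z ^ (d + 1) + x * y) / y with hw
  have h1 : w ^ 2 - w * x + y ^ d * z ^ d = 0 := by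
    rw [hw]
    field_simp
    linear_combination (-z ^ d) * hrel
  refine ⟨h1, ?_⟩
  have hx : x ∈ Subring.closure ({x, y, z} : Set K) :=
    Subring.subset_closure (by simp)
  have hy' : y ∈ Subring.closure ({x, y, z} : Set K) :=
    Subring.subset_closure (by simp)
  have hz : z ∈ Subring.closure ({x, y, z} : Set K) :=
    Subring.subset_closure (by simp)
  refine ⟨Polynomial.X ^ 2 - Polynomial.C ⟨x, hx⟩ * Polynomial.X +
      Polynomial.C (⟨y, hy'⟩ ^ d * ⟨z, hz⟩ ^ d), ?_, ?_⟩
  · monicity!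
  · simp only [Polynomial.eval₂_add, Polynomial.eval₂_sub, Polynomial.eval₂_mul,
      Polynomial.eval₂_pow, Polynomial.eval₂_X, Polynomial.eval₂_C,
      Algebra.algebraMap_ofSubsemiring_apply]
    push_cast
    linear_combination h1
end
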